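/- Assume ϖ_k is minuscule, J = I \ {k}, and let ⊲, ≺ be two reflection orders on Δ⁺ both satisfying: β ⊲ γ (resp. β ≺ γ) for all β ∈ Δ⁺_J and γ ∈ Δ⁺ \ Δ⁺_J. For y ∈ W^J, let ed(BG_y^⊲) denote the set of endpoints of label-increasing (with respect to ⊲) directed paths in the Bruhat graph BG(W) starting at y all of whose labels lie in Δ⁺ \ Δ⁺_J. Then ed(BG_y^⊲) = ed(BG_y^≺), i.e. this set of endpoints is independent of the choice of such a reflection order. -/

import Mathlib

/-- An axiomatized finite crystallographic root system datum, with weight/root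
space `V` over `ℚ`, simple roots `α i`, an invariant inner product `B`,
Weyl group `W` acting faithfully on `V`, and the set of roots `isRoot`. -/
structure RootSystemData (I : Type) [Fintype I] [DecidableEq I] where
  V : Type
  [instAddCommGroup : AddCommGroup V]
  [instModule : Module ℚ V]
  W : Type
  [instGroup : Group W]
  α : I → V
  B : V →ₗ[ℚ] V →ₗ[ℚ] ℚ
  toLin : W →* Module.End ℚ V
  s : I → W
  isRoot : V → Prop
  B_symm : ∀ x y, B x y = B y x
  B_pos : ∀ β, isRoot β → 0 < B β β
  B_inv : ∀ (w : W) (x y : V), B (toLin w x) (toLin w y) = B x y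
  root_simple : ∀ i, isRoot (α i)
  root_inv : ∀ (w : W) (β : V), isRoot β → isRoot (toLin w β)
  root_gen : ∀ β, isRoot β → ∃ (w : W) (i : I), β = toLin w (α i)
  root_finite : (setOf isRoot).Finite
  indep : LinearIndependent ℚ α
  s_act : ∀ i x, toLin (s i) x = x - (2 * B (α i) x / B (α i) (α i)) • α i
  gen : Subgroup.closure (Set.range s) = ⊤
  faithful : Function.Injective toLin
  root_int : ∀ β, isRoot β → ∃ c : I → ℤ, β = ∑ i, (c i : ℚ) • α i
  pos_or_neg : ∀ β, isRoot β →
    (∃ c : I → ℕ, β = ∑ i, (c i : ℚ) • α i) ∨ (∃ c : I → ℕ, -β = ∑ i, (c i : ℚ) • α i)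

attribute [instance] RootSystemData.instAddCommGroup RootSystemData.instModule
  RootSystemData.instGroup

namespace RootSystemData

variable {I : Type} [Fintype I] [DecidableEq I] (R : RootSystemData I)

/-- `β` is a positive root. -/
def IsPos (β : R.V) : Prop :=
  R.isRoot β ∧ ∃ c : I → ℕ, β = ∑ i, (c i : ℚ) • R.α i

/-- The finite set of positive roots. -/
noncomputable def posFinset : Finset R.V :=
  (Set.Finite.subset R.root_finite (fun _ hb => hb.1) : (setOf R.IsPos).Finite).toFinset

/-- Half the sum of the positive roots. -/
noncomputable def ρ : R.V := (2 : ℚ)⁻¹ • ∑ β ∈ R.posFinset, β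

/-- The pairing `⟨x, β∨⟩` of `x` with the coroot of `β`. -/
noncomputable def coroot (β x : R.V) : ℚ := 2 * R.B β x / R.B β β

open Classical in
/-- The reflection `s_β ∈ W` in a root `β`. -/
noncomputable def refl (β : R.V) : R.W :=
  if h : R.isRoot β then
    (R.root_gen β h).choose * R.s (R.root_gen β h).choose_spec.choose *
      (R.root_gen β h).choose⁻¹
  else 1

/-- The length function on the Weyl group. -/
noncomputable def len (w : R.W) : ℕ :=
  sInf {n | ∃ l : List I, l.length = n ∧ (l.map R.s).prod = w}

/-- Bruhat order: generated by multiplication by reflections which increases length. -/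
def bruhatLE : R.W → R.W → Prop :=
  Relation.ReflTransGen (fun u v => (∃ β, R.IsPos β ∧ v = R.refl β * u) ∧ R.len u < R.len v)

def bruhatLT (u v : R.W) : Prop := R.bruhatLE u v ∧ u ≠ v

/-- The parabolic subgroup `W_J`. -/
def WJ (J : Set I) : Subgroup R.W := Subgroup.closure (R.s '' J)

/-- `w` is a minimal-length representative of its coset `w W_J`. -/
def IsMinRep (J : Set I) (w : R.W) : Prop :=
  ∀ z ∈ R.WJ J, R.len w ≤ R.len (w * z)

/-- `β ∈ Δ⁺_J`: positive roots in the span of the simple roots indexed by `J`. -/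
def posJ (J : Set I) (β : R.V) : Prop :=
  R.IsPos β ∧ β ∈ Submodule.span ℚ (R.α '' J)

/-- A Bruhat edge `x → x s_β` in the quantum Bruhat graph. -/
def BruhatEdge (x : R.W) (β : R.V) : Prop :=
  R.IsPos β ∧ R.len (x * R.refl β) = R.len x + 1

/-- A quantum edge `x → x s_β` in the quantum Bruhat graph. -/
def QuantumEdge (x : R.W) (β : R.V) : Prop :=
  R.IsPos β ∧ (R.len (x * R.refl β) : ℚ) = R.len x + 1 - 2 * R.coroot β R.ρ

/-- An edge of the quantum Bruhat graph. -/
def QBGEdge (x : R.W) (β : R.V) : Prop := R.BruhatEdge x β ∨ R.QuantumEdge x β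

/-- A quantum root: `ℓ(s_β) = 2⟨ρ, β∨⟩ - 1`. -/
def IsQuantumRoot (β : R.V) : Prop :=
  R.IsPos β ∧ (R.len (R.refl β) : ℚ) = 2 * R.coroot β R.ρ - 1

/-- A long root (maximal squared length); in simply-laced type all roots are long. -/
def IsLong (β : R.V) : Prop :=
  R.isRoot β ∧ ∀ γ, R.isRoot γ → R.B γ γ ≤ R.B β β

/-- A short root. -/
def IsShort (β : R.V) : Prop := R.isRoot β ∧ ¬ R.IsLong β

def IsSimplyLaced : Prop :=
  ∀ β γ, R.isRoot β → R.isRoot γ → R.B β β = R.B γ γ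

def IsIrreducible : Prop :=
  Nonempty I ∧ ∀ J : Set I,
    (∀ i ∈ J, ∀ j ∉ J, R.B (R.α i) (R.α j) = 0) → J = ∅ ∨ J = Set.univ

/-- `θ` is the highest root. -/
def IsHighestRoot (θ : R.V) : Prop :=
  R.IsPos θ ∧ ∀ β, R.IsPos β → ∃ c : I → ℕ, θ - β = ∑ i, (c i : ℚ) • R.α i

/-- `ϖ` is the fundamental weight associated to `k`. -/
def IsFundamental (k : I) (ϖ : R.V) : Prop :=
  ∀ i, R.coroot (R.α i) ϖ = if i = k then 1 else 0

/-- `ϖ` is minuscule. -/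
def IsMinuscule (ϖ : R.V) : Prop :=
  ∀ β, R.isRoot β → R.coroot β ϖ ∈ ({-1, 0, 1} : Set ℚ)

/-- A strict total order on `Δ⁺` which is a reflection (convex) order. -/
def IsReflectionOrder (lt : R.V → R.V → Prop) : Prop :=
  (∀ β, ¬ lt β β) ∧ (∀ a b c, lt a b → lt b c → lt a c) ∧
  (∀ β γ, R.IsPos β → R.IsPos γ → β ≠ γ → lt β γ ∨ lt γ β) ∧
  (∀ β γ, R.IsPos β → R.IsPos γ → R.IsPos (β + γ) →
    (lt β (β + γ) ∧ lt (β + γ) γ) ∨ (lt γ (β + γ) ∧ lt (β + γ) β))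

end RootSystemData

open RootSystemData in
/-- A directed path in the quantum Bruhat graph with the given list of labels. -/
def QBGPath {I : Type} [Fintype I] [DecidableEq I] (R : RootSystemData I) :
    R.W → List R.V → R.W → Prop
  | x, [], y => x = y
  | x, β :: l, y => R.QBGEdge x β ∧ QBGPath R (x * R.refl β) l y

open RootSystemData in
/-- A directed path in the Bruhat graph (Bruhat edges only). -/
def BGPath {I : Type} [Fintype I] [DecidableEq I] (R : RootSystemData I) :
    R.W → List R.V → R.W → Prop
  | x, [], y => x = y
  | x, β :: l, y => R.BruhatEdge x β ∧ BGPath R (x * R.refl β) l y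

/-- The Cartan pairing `⟨α_j, α_i∨⟩` of type `B_n` (Bourbaki labelling, shifted
to be 0-based: the short simple root is the last one, index `n-1`). -/
def BCartan (n : ℕ) (i j : Fin n) : ℚ :=
  if i = j then 2
  else if (i : ℕ) = n - 1 ∧ (j : ℕ) + 1 = n - 1 then -2
  else if ((i : ℕ) + 1 = j ∨ (j : ℕ) + 1 = i) then -1
  else 0

/-- `R` is of type `B_n` (via the identification `e` of its index set with `Fin n`). -/
def IsTypeB {I : Type} [Fintype I] [DecidableEq I] (R : RootSystemData I)
    (n : ℕ) (e : I ≃ Fin n) : Prop :=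
  2 ≤ n ∧ ∀ i j, R.coroot (R.α i) (R.α j) = BCartan n (e i) (e j)

/-- The product `s_{a+1} s_{a+2} ⋯ s_{b+1}` (0-based: indices `a, a+1, …, b`). -/
noncomputable def sSeq {n : ℕ} (hn : 0 < n) (R : RootSystemData (Fin n)) (a b : ℕ) : R.W :=
  ((List.range (b + 1 - a)).map (fun t => R.s ⟨(a + t) % n, Nat.mod_lt _ hn⟩)).prod

/-- The sum `α_{a+1} + ⋯ + α_b` of simple roots (0-based half-open interval `[a, b)`). -/
def aSum {n : ℕ} (hn : 0 < n) (R : RootSystemData (Fin n)) (a b : ℕ) : R.V :=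
  ∑ t ∈ Finset.Ico a b, R.α ⟨t % n, Nat.mod_lt _ hn⟩

namespace RootSystemData

variable {I : Type} [Fintype I] [DecidableEq I] (R : RootSystemData I)

/-- The reflection in `δ` as a linear endomorphism. -/
noncomputable def rmap (δ : R.V) : R.V →ₗ[ℚ] R.V :=
  LinearMap.id - LinearMap.smulRight ((2 / R.B δ δ) • (R.B δ)) δ

lemma rmap_apply (δ x : R.V) : R.rmap δ x = x - (2 * R.B δ x / R.B δ δ) • δ := by
  simp only [rmap, LinearMap.sub_apply, LinearMap.id_apply, LinearMap.smulRight_apply,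
    LinearMap.smul_apply, smul_eq_mul]
  rw [div_mul_eq_mul_div]

lemma B_ne_zero {δ : R.V} (h : R.isRoot δ) : R.B δ δ ≠ 0 := ne_of_gt (R.B_pos δ h)

lemma rmap_self {δ : R.V} (h : R.isRoot δ) : R.rmap δ δ = -δ := by
  rw [rmap_apply, mul_div_assoc, div_self (R.B_ne_zero h)]
  module

lemma rmap_invol {δ : R.V} (h : R.isRoot δ) (x : R.V) : R.rmap δ (R.rmap δ x) = x := by
  have hδ := R.B_ne_zero h
  rw [rmap_apply, rmap_apply]
  rw [map_sub, map_smul]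
  field_simp
  match_scalars <;> field_simp <;> simp [hδ] <;> ring

lemma toLin_s (i : I) : R.toLin (R.s i) = R.rmap (R.α i) := by
  ext x
  rw [R.s_act, rmap_apply]

lemma conj_formula (w : R.W) (δ x : R.V) :
    R.toLin w (R.rmap δ x) = R.rmap (R.toLin w δ) (R.toLin w x) := by
  rw [rmap_apply, rmap_apply, map_sub, map_smul, R.B_inv, R.B_inv]

lemma rmap_smul {q : ℚ} (hq : q ≠ 0) (δ : R.V) : R.rmap (q • δ) = R.rmap δ := by
  ext x
  rw [rmap_apply, rmap_apply, map_smul, map_smul, LinearMap.smul_apply]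
  rw [smul_eq_mul, smul_eq_mul, smul_smul]
  congr 2
  rcases eq_or_ne (R.B δ δ) 0 with h0 | h0
  · simp [h0]
  · field_simp
    rw [LinearMap.smul_apply, smul_eq_mul]
    ring

lemma s_sq (i : I) : R.s i * R.s i = 1 := by
  apply R.faithful
  ext x
  simp only [map_mul, map_one, Module.End.mul_apply, Module.End.one_apply, toLin_s]
  exact R.rmap_invol (R.root_simple i) x

lemma toLin_refl {δ : R.V} (h : R.isRoot δ) : R.toLin (R.refl δ) = R.rmap δ := by
  rw [refl, dif_pos h]
  set u := (R.root_gen δ h).choose with hu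
  set j := (R.root_gen δ h).choose_spec.choose with hj
  have hspec : δ = R.toLin u (R.α j) := (R.root_gen δ h).choose_spec.choose_spec
  ext x
  rw [map_mul, map_mul, Module.End.mul_apply, Module.End.mul_apply, toLin_s]
  have h1 : R.toLin u (R.rmap (R.α j) (R.toLin u⁻¹ x))
      = R.rmap (R.toLin u (R.α j)) (R.toLin u (R.toLin u⁻¹ x)) := R.conj_formula _ _ _
  rw [h1]
  have h2 : R.toLin u (R.toLin u⁻¹ x) = x := by
    rw [← Module.End.mul_apply, ← map_mul, mul_inv_cancel, map_one, Module.End.one_apply]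
  rw [h2, ← hspec]

lemma refl_sq {δ : R.V} (h : R.isRoot δ) : R.refl δ * R.refl δ = 1 := by
  apply R.faithful
  ext x
  simp only [map_mul, map_one, Module.End.mul_apply, Module.End.one_apply, R.toLin_refl h]
  exact R.rmap_invol h x

lemma refl_comm {β γ : R.V} (hβ : R.isRoot β) (hγ : R.isRoot γ) (ho : R.B β γ = 0) :
    R.refl β * R.refl γ = R.refl γ * R.refl β := by
  have ho' : R.B γ β = 0 := by rw [R.B_symm]; exact ho
  apply R.faithful
  ext x
  simp only [map_mul, Module.End.mul_apply, R.toLin_refl hβ, R.toLin_refl hγ]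
  rw [rmap_apply, rmap_apply, rmap_apply, rmap_apply]
  rw [map_sub, map_sub, map_smul, map_smul, ho, ho']
  simp only [smul_eq_mul, mul_zero, zero_div, zero_smul, sub_zero]
  module

lemma rmap_orth {β γ : R.V} (ho : R.B β γ = 0) : R.rmap β γ = γ := by
  rw [rmap_apply, ho]
  simp

lemma isRoot_neg {δ : R.V} (h : R.isRoot δ) : R.isRoot (-δ) := by
  have := R.root_inv (R.refl δ) δ h
  rwa [R.toLin_refl h, R.rmap_self h] at this

lemma isRoot_ne_zero {δ : R.V} (h : R.isRoot δ) : δ ≠ 0 := by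
  intro h0
  have := R.B_pos δ h
  rw [h0] at this
  simp at this

lemma sum_coeff_zero {c : I → ℚ} (h : ∑ i, c i • R.α i = 0) : ∀ i, c i = 0 := by
  have := linearIndependent_iff'.mp R.indep Finset.univ c h
  intro i; exact this i (Finset.mem_univ i)

lemma pos_neg_absurd {δ : R.V} (h1 : R.IsPos δ) (h2 : R.IsPos (-δ)) : False := by
  obtain ⟨hr, c, hc⟩ := h1
  obtain ⟨-, d, hd⟩ := h2
  have hsum : ∑ i, ((c i : ℚ) + (d i : ℚ)) • R.α i = 0 := by
    simp only [add_smul, Finset.sum_add_distrib, ← hc, ← hd]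
    abel
  have hzero := R.sum_coeff_zero hsum
  have hc0 : ∀ i, (c i : ℚ) = 0 := by
    intro i
    have := hzero i
    have hnn : (0:ℚ) ≤ (c i : ℚ) := Nat.cast_nonneg _
    have hnn' : (0:ℚ) ≤ (d i : ℚ) := Nat.cast_nonneg _
    linarith
  apply R.isRoot_ne_zero hr
  rw [hc]
  apply Finset.sum_eq_zero
  intro i _
  rw [hc0 i, zero_smul]

lemma pos_or_negpos {δ : R.V} (h : R.isRoot δ) : R.IsPos δ ∨ R.IsPos (-δ) := by
  rcases R.pos_or_neg δ h with ⟨c, hc⟩ | ⟨c, hc⟩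
  · exact Or.inl ⟨h, c, hc⟩
  · exact Or.inr ⟨R.isRoot_neg h, c, hc⟩

end RootSystemData
namespace RootSystemData

variable {I : Type} [Fintype I] [DecidableEq I] (R : RootSystemData I)

lemma exists_word (w : R.W) : ∃ l : List I, (l.map R.s).prod = w := by
  have hw : w ∈ Subgroup.closure (Set.range R.s) := by rw [R.gen]; trivial
  induction hw using Subgroup.closure_induction with
  | mem x hx =>
      obtain ⟨i, rfl⟩ := hx
      exact ⟨[i], by simp⟩
  | one => exact ⟨[], by simp⟩
  | mul x y _ _ hx hy =>
      obtain ⟨l1, h1⟩ := hx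
      obtain ⟨l2, h2⟩ := hy
      exact ⟨l1 ++ l2, by rw [List.map_append, List.prod_append, h1, h2]⟩
  | inv x _ hx =>
      obtain ⟨l, hl⟩ := hx
      refine ⟨l.reverse, ?_⟩
      rw [List.map_reverse, List.prod_reverse_noncomm, List.map_map]
      have hcomp : ((fun x => x⁻¹) ∘ R.s) = R.s := by
        funext i
        simp only [Function.comp_apply]
        exact inv_eq_of_mul_eq_one_left (R.s_sq i)
      rw [hcomp, hl]

lemma len_le_word {w : R.W} {l : List I} (h : (l.map R.s).prod = w) :
    R.len w ≤ l.length := Nat.sInf_le ⟨l, rfl, h⟩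

lemma exists_reduced (w : R.W) :
    ∃ l : List I, l.length = R.len w ∧ (l.map R.s).prod = w := by
  have hne : {n | ∃ l : List I, l.length = n ∧ (l.map R.s).prod = w}.Nonempty := by
    obtain ⟨l, hl⟩ := R.exists_word w
    exact ⟨l.length, l, rfl, hl⟩
  exact Nat.sInf_mem hne

/-- Sends a positive root to a negative: must be a positive multiple of the simple root. -/
lemma simple_scalar {i : I} {δ : R.V} (hδ : R.IsPos δ)
    (hneg : R.IsPos (-(R.rmap (R.α i) δ))) : ∃ q : ℚ, q ≠ 0 ∧ δ = q • R.α i := by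
  obtain ⟨hr, c, hc⟩ := hδ
  obtain ⟨-, d, hd⟩ := hneg
  rw [rmap_apply] at hd
  set t : ℚ := 2 * R.B (R.α i) δ / R.B (R.α i) (R.α i) with ht
  have key : ∑ j, (((c j : ℚ) + (d j : ℚ)) - (if j = i then t else 0)) • R.α j = 0 := by
    have h1 : ∑ j, (if j = i then t else 0) • R.α j = t • R.α i := by
      rw [Finset.sum_eq_single i]
      · simp
      · intro j _ hj; rw [if_neg hj, zero_smul]
      · intro h; exact absurd (Finset.mem_univ i) h
    simp only [sub_smul, add_smul, Finset.sum_sub_distrib, Finset.sum_add_distrib]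
    rw [h1, ← hc, ← hd]
    abel
  have hz := R.sum_coeff_zero key
  have hcj : ∀ j, j ≠ i → (c j : ℚ) = 0 := by
    intro j hj
    have := hz j
    rw [if_neg hj, sub_zero] at this
    have hnn : (0:ℚ) ≤ (c j : ℚ) := Nat.cast_nonneg _
    have hnn' : (0:ℚ) ≤ (d j : ℚ) := Nat.cast_nonneg _
    linarith
  have hδi : δ = (c i : ℚ) • R.α i := by
    rw [hc]
    rw [Finset.sum_eq_single i]
    · intro j _ hj
      rw [hcj j hj, zero_smul]
    · intro h; exact absurd (Finset.mem_univ i) h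
  refine ⟨(c i : ℚ), ?_, hδi⟩
  intro h0
  apply R.isRoot_ne_zero hr
  rw [hδi, h0, zero_smul]

/-- The exchange property. -/
lemma exchange {δ : R.V} (hδ : R.IsPos δ) :
    ∀ l : List I, R.IsPos (-(R.toLin (l.map R.s).prod δ)) →
    ∃ l' : List I, l'.length + 1 = l.length ∧
      (l'.map R.s).prod = (l.map R.s).prod * R.refl δ := by
  intro l
  induction l with
  | nil =>
      intro hneg
      simp only [List.map_nil, List.prod_nil, map_one, Module.End.one_apply] at hneg
      exact absurd hneg (fun h => R.pos_neg_absurd hδ h)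
  | cons i rest ih =>
      intro hneg
      set π := (rest.map R.s).prod
      have hprod : ((i :: rest).map R.s).prod = R.s i * π := by
        simp [π]
      set δ' := R.toLin π δ with hδ'
      have hδ'root : R.isRoot δ' := R.root_inv _ _ hδ.1
      have happ : R.toLin ((i :: rest).map R.s).prod δ = R.rmap (R.α i) δ' := by
        rw [hprod, map_mul, Module.End.mul_apply, toLin_s]
      rcases R.pos_or_negpos hδ'root with hpos | hneg'
      · -- crossing here
        rw [happ] at hneg
        obtain ⟨q, hq, hqe⟩ := R.simple_scalar hpos hneg
        have hkey : R.s i * π = π * R.refl δ := by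
          apply R.faithful
          ext x
          rw [map_mul, map_mul, Module.End.mul_apply, Module.End.mul_apply, toLin_s,
            R.toLin_refl hδ.1, R.conj_formula]
          rw [show R.toLin π δ = δ' from rfl, hqe, R.rmap_smul hq]
        refine ⟨rest, by simp, ?_⟩
        rw [hprod, hkey, mul_assoc, R.refl_sq hδ.1, mul_one]
      · obtain ⟨rest', hlen, hre⟩ := ih hneg'
        refine ⟨i :: rest', by simp [← hlen], ?_⟩
        simp only [List.map_cons, List.prod_cons]
        rw [hre, mul_assoc]

lemma len_lt_of_neg {δ : R.V} {w : R.W} (hδ : R.IsPos δ)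
    (hneg : R.IsPos (-(R.toLin w δ))) : R.len (w * R.refl δ) < R.len w := by
  obtain ⟨l, hlen, hprod⟩ := R.exists_reduced w
  have := R.exchange hδ l (by rw [hprod]; exact hneg)
  obtain ⟨l', hl', hpe⟩ := this
  have hle := R.len_le_word (w := w * R.refl δ) (l := l') (by rw [hpe, hprod])
  omega

lemma len_lt_of_pos {δ : R.V} {w : R.W} (hδ : R.IsPos δ)
    (hpos : R.IsPos (R.toLin w δ)) : R.len w < R.len (w * R.refl δ) := by
  have h1 : R.toLin (w * R.refl δ) δ = -(R.toLin w δ) := by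
    rw [map_mul, Module.End.mul_apply, R.toLin_refl hδ.1, R.rmap_self hδ.1, map_neg]
  have h2 : R.IsPos (-(R.toLin (w * R.refl δ) δ)) := by rw [h1, neg_neg]; exact hpos
  have := R.len_lt_of_neg hδ h2
  rwa [mul_assoc, R.refl_sq hδ.1, mul_one] at this

lemma pos_of_edge' {x : R.W} {β : R.V} (h : R.BruhatEdge x β) : R.IsPos (R.toLin x β) := by
  have hroot : R.isRoot (R.toLin x β) := R.root_inv _ _ h.1.1
  rcases R.pos_or_negpos hroot with hp | hn
  · exact hp
  · exfalso
    have hlt := R.len_lt_of_neg h.1 hn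
    rw [h.2] at hlt
    omega

/-- The diamond lemma for a pair of orthogonal labels. -/
lemma diamond {x : R.W} {β γ : R.V} (h1 : R.BruhatEdge x β)
    (h2 : R.BruhatEdge (x * R.refl β) γ) (ho : R.B β γ = 0) :
    R.BruhatEdge x γ ∧ R.BruhatEdge (x * R.refl γ) β ∧
      x * R.refl β * R.refl γ = x * R.refl γ * R.refl β := by
  have hβr : R.isRoot β := h1.1.1
  have hγr : R.isRoot γ := h2.1.1
  have ho' : R.B γ β = 0 := by rw [R.B_symm]; exact ho
  have hcomm : R.refl β * R.refl γ = R.refl γ * R.refl β := R.refl_comm hβr hγr ho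
  have hxγ : R.IsPos (R.toLin x γ) := by
    have := R.pos_of_edge' h2
    rwa [map_mul, Module.End.mul_apply, R.toLin_refl hβr, R.rmap_orth ho] at this
  have hxβ : R.IsPos (R.toLin x β) := R.pos_of_edge' h1
  have l1 : R.len x < R.len (x * R.refl γ) := R.len_lt_of_pos h2.1 hxγ
  have hxγβ : R.IsPos (R.toLin (x * R.refl γ) β) := by
    rw [map_mul, Module.End.mul_apply, R.toLin_refl hγr, R.rmap_orth ho']
    exact hxβ
  have l2 : R.len (x * R.refl γ) < R.len (x * R.refl γ * R.refl β) := R.len_lt_of_pos h1.1 hxγβ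
  have hcommx : x * R.refl γ * R.refl β = x * R.refl β * R.refl γ := by
    rw [mul_assoc, mul_assoc, hcomm]
  have ltot : R.len (x * R.refl β * R.refl γ) = R.len x + 2 := by
    rw [h2.2, h1.2]
  rw [hcommx, ltot] at l2
  have hlenγ : R.len (x * R.refl γ) = R.len x + 1 := by omega
  refine ⟨⟨h2.1, hlenγ⟩, ⟨h1.1, ?_⟩, hcommx.symm⟩
  rw [hcommx, ltot, hlenγ]

end RootSystemData
namespace RootSystemData

variable {I : Type} [Fintype I] [DecidableEq I] (R : RootSystemData I)

section Level

variable (k : I) (ϖ : R.V) (J : Set I)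

lemma B_w_simple {i : I} (hfund : R.IsFundamental k ϖ) (hik : i ≠ k) :
    R.B (R.α i) ϖ = 0 := by
  have h := hfund i
  rw [if_neg hik] at h
  rw [coroot] at h
  rcases div_eq_zero_iff.mp h with h' | h'
  · linarith
  · exact absurd h' (R.B_ne_zero (R.root_simple i))

lemma B_w_k (hfund : R.IsFundamental k ϖ) :
    R.B (R.α k) ϖ = R.B (R.α k) (R.α k) / 2 := by
  have h := hfund k
  rw [if_pos rfl, coroot] at h
  have hne := R.B_ne_zero (R.root_simple k)
  field_simp at h
  linarith

lemma B_w_k_pos (hfund : R.IsFundamental k ϖ) : 0 < R.B (R.α k) ϖ := by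
  rw [R.B_w_k k ϖ hfund]
  have := R.B_pos _ (R.root_simple k)
  linarith

lemma span_B_zero (hfund : R.IsFundamental k ϖ) (hJ : J = {i | i ≠ k})
    {v : R.V} (hv : v ∈ Submodule.span ℚ (R.α '' J)) : R.B v ϖ = 0 := by
  induction hv using Submodule.span_induction with
  | mem x hx =>
      obtain ⟨i, hi, rfl⟩ := hx
      have hik : i ≠ k := by rw [hJ] at hi; exact hi
      exact R.B_w_simple k ϖ hfund hik
  | zero => simp
  | add x y _ _ hx hy => rw [map_add, LinearMap.add_apply, hx, hy, add_zero]
  | smul a x _ hx => rw [map_smul, LinearMap.smul_apply, hx, smul_zero]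

lemma pos_B_coeff (hfund : R.IsFundamental k ϖ) {δ : R.V} {c : I → ℕ}
    (hc : δ = ∑ i, (c i : ℚ) • R.α i) : R.B δ ϖ = (c k : ℚ) * R.B (R.α k) ϖ := by
  rw [hc, map_sum, LinearMap.sum_apply]
  rw [Finset.sum_eq_single k]
  · rw [map_smul, LinearMap.smul_apply, smul_eq_mul]
  · intro i _ hik
    rw [map_smul, LinearMap.smul_apply, smul_eq_mul, R.B_w_simple k ϖ hfund hik, mul_zero]
  · intro h; exact absurd (Finset.mem_univ k) h

lemma pos_B_nonneg (hfund : R.IsFundamental k ϖ) {δ : R.V} (hδ : R.IsPos δ) :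
    0 ≤ R.B δ ϖ := by
  obtain ⟨-, c, hc⟩ := hδ
  rw [R.pos_B_coeff k ϖ hfund hc]
  exact mul_nonneg (Nat.cast_nonneg _) (le_of_lt (R.B_w_k_pos k ϖ hfund))

lemma pos_B_zero_mem (hfund : R.IsFundamental k ϖ) (hJ : J = {i | i ≠ k})
    {δ : R.V} (hδ : R.IsPos δ) (h0 : R.B δ ϖ = 0) :
    δ ∈ Submodule.span ℚ (R.α '' J) := by
  obtain ⟨-, c, hc⟩ := hδ
  have hck : (c k : ℚ) = 0 := by
    have := R.pos_B_coeff k ϖ hfund hc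
    rw [h0] at this
    have hkpos := R.B_w_k_pos k ϖ hfund
    rcases mul_eq_zero.mp this.symm with h | h
    · exact h
    · exact absurd h (ne_of_gt hkpos)
  rw [hc]
  apply Submodule.sum_mem
  intro i _
  rcases eq_or_ne i k with rfl | hik
  · rw [hck, zero_smul]; exact Submodule.zero_mem _
  · apply Submodule.smul_mem
    apply Submodule.subset_span
    exact ⟨i, by rw [hJ]; exact hik, rfl⟩

lemma pos_out_B (hfund : R.IsFundamental k ϖ) (hJ : J = {i | i ≠ k})
    {δ : R.V} (hδ : R.IsPos δ) (hs : δ ∉ Submodule.span ℚ (R.α '' J)) :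
    0 < R.B δ ϖ := by
  rcases lt_or_eq_of_le (R.pos_B_nonneg k ϖ hfund hδ) with h | h
  · exact h
  · exact absurd (R.pos_B_zero_mem k ϖ J hfund hJ hδ h.symm) hs

lemma lev1 (hfund : R.IsFundamental k ϖ) (hmin : R.IsMinuscule ϖ) (hJ : J = {i | i ≠ k})
    {δ : R.V} (hδ : R.IsPos δ) (hs : δ ∉ Submodule.span ℚ (R.α '' J)) :
    R.B δ ϖ = R.B δ δ / 2 := by
  have hpos := R.pos_out_B k ϖ J hfund hJ hδ hs
  have hden := R.B_pos δ hδ.1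
  have hm := hmin δ hδ.1
  rw [coroot] at hm
  simp only [Set.mem_insert_iff, Set.mem_singleton_iff] at hm
  rcases hm with h | h | h
  · exfalso
    have : 2 * R.B δ ϖ / R.B δ δ > 0 := by positivity
    linarith
  · exfalso
    rw [div_eq_zero_iff] at h
    rcases h with h | h
    · linarith
    · linarith
  · field_simp at h
    linarith

/-- For two positive roots outside the span, `2⟨β,γ⟩/⟨γ,γ⟩ ∈ {0,1,2}`. -/
lemma cartan_range (hfund : R.IsFundamental k ϖ) (hmin : R.IsMinuscule ϖ)
    (hJ : J = {i | i ≠ k}) {β γ : R.V}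
    (hβp : R.IsPos β) (hβs : β ∉ Submodule.span ℚ (R.α '' J))
    (hγp : R.IsPos γ) (hγs : γ ∉ Submodule.span ℚ (R.α '' J)) :
    2 * R.B β γ / R.B γ γ = 0 ∨ 2 * R.B β γ / R.B γ γ = 1 ∨ 2 * R.B β γ / R.B γ γ = 2 := by
  set b := R.B β β with hbdef
  set g := R.B γ γ with hgdef
  set m := R.B β γ with hmdef
  have hb : 0 < b := R.B_pos β hβp.1
  have hg : 0 < g := R.B_pos γ hγp.1
  set δ := R.rmap β γ with hδdef
  have hδroot : R.isRoot δ := by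
    rw [hδdef, ← R.toLin_refl hβp.1]
    exact R.root_inv _ _ hγp.1
  have hδδ : R.B δ δ = g := by
    rw [hδdef, ← R.toLin_refl hβp.1, R.B_inv]
  have hβw : R.B β ϖ = b / 2 := R.lev1 k ϖ J hfund hmin hJ hβp hβs
  have hγw : R.B γ ϖ = g / 2 := R.lev1 k ϖ J hfund hmin hJ hγp hγs
  have hδw : R.B δ ϖ = g / 2 - m := by
    rw [hδdef, rmap_apply, map_sub, LinearMap.sub_apply, map_smul, LinearMap.smul_apply,
      smul_eq_mul, hγw, hβw, ← hbdef, ← hmdef]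
    field_simp
    try ring
  have hm := hmin δ hδroot
  rw [coroot, hδδ, hδw] at hm
  simp only [Set.mem_insert_iff, Set.mem_singleton_iff] at hm
  rcases hm with h | h | h
  · right; right
    field_simp at h ⊢
    linarith
  · right; left
    rw [div_eq_zero_iff] at h
    rcases h with h | h
    · field_simp
      linarith
    · linarith
  · left
    field_simp at h ⊢
    linarith

end Level

end RootSystemData
namespace RootSystemData

variable {I : Type} [Fintype I] [DecidableEq I] (R : RootSystemData I)

/-- An admissible order: a reflection order, with `Δ⁺_J` initial, relating only
positive roots. -/
def Adm (J : Set I) (lt : R.V → R.V → Prop) : Prop :=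
  R.IsReflectionOrder lt ∧
  (∀ p q, R.IsPos p → p ∈ Submodule.span ℚ (R.α '' J) → R.IsPos q →
    q ∉ Submodule.span ℚ (R.α '' J) → lt p q) ∧
  (∀ p q, lt p q → R.IsPos p ∧ R.IsPos q)

lemma adm_asym {J : Set I} {lt : R.V → R.V → Prop} (h : R.Adm J lt)
    {a b : R.V} (hab : lt a b) (hba : lt b a) : False :=
  h.1.1 a (h.1.2.1 a b a hab hba)

lemma same_length_pair_absurd {β γ : R.V} (hβ : R.isRoot β) (hγ : R.isRoot γ)
    (hne : β ≠ γ) (hm : R.B β γ = R.B β β) (hg : R.B γ γ = R.B β β) : False := by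
  set b := R.B β β with hb
  have hbpos : 0 < b := R.B_pos β hβ
  have hbne : b ≠ 0 := ne_of_gt hbpos
  set f : ℕ → R.V := fun n => (2*(n:ℚ)+1) • β - (2*(n:ℚ)) • γ with hf
  have hroots : ∀ n, R.isRoot (f n) := by
    intro n
    induction n with
    | zero => simpa [hf] using hβ
    | succ n ih =>
        have hBγf : R.B γ (f n) = b := by
          simp only [hf, map_sub, map_smul, smul_eq_mul]
          rw [R.B_symm γ β, hm, hg]
          ring
        have hrγ : R.rmap γ (f n) = f n - (2:ℚ) • γ := by
          rw [rmap_apply, hBγf, hg]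
          congr 2
          field_simp
        have hBβf : R.B β (f n - (2:ℚ) • γ) = -b := by
          simp only [hf, map_sub, map_smul, smul_eq_mul]
          rw [hm]
          ring
        have hrβ : R.rmap β (f n - (2:ℚ) • γ) = f (n+1) := by
          rw [rmap_apply, hBβf]
          simp only [hf]
          push_cast
          match_scalars <;> field_simp [R.B_ne_zero hβ, hb] <;> ring
        have : R.isRoot (R.rmap β (R.rmap γ (f n))) := by
          rw [← R.toLin_refl hβ, ← R.toLin_refl hγ]
          exact R.root_inv _ _ (R.root_inv _ _ ih)
        rwa [hrγ, hrβ] at this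
  have hinj : Function.Injective f := by
    intro n₁ n₂ hfe
    have hv : (2*(n₁:ℚ) - 2*(n₂:ℚ)) • (β - γ) = 0 := by
      have hz : f n₁ - f n₂ = 0 := sub_eq_zero.mpr hfe
      rw [← hz]
      simp only [hf]
      module
    rcases smul_eq_zero.mp hv with h | h
    · have : (n₁ : ℚ) = n₂ := by linarith [h]
      exact_mod_cast this
    · exact absurd (sub_eq_zero.mp h) hne
  exact Set.Finite.not_infinite R.root_finite
    (Set.infinite_of_injective_forall_mem hinj hroots)

lemma pair_exclusion (k : I) (ϖ : R.V) (J : Set I)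
    (hfund : R.IsFundamental k ϖ) (hmin : R.IsMinuscule ϖ) (hJ : J = {i | i ≠ k})
    {lt ltB : R.V → R.V → Prop} (hlt : R.Adm J lt) (hltB : R.Adm J ltB) {β γ : R.V}
    (hβp : R.IsPos β) (hβs : β ∉ Submodule.span ℚ (R.α '' J))
    (hγp : R.IsPos γ) (hγs : γ ∉ Submodule.span ℚ (R.α '' J))
    (h12 : lt β γ) (h21 : ltB γ β)
    (hadj : ∀ ρ, R.IsPos ρ → lt β ρ → lt ρ γ → False) :
    R.B β γ = 0 ∧ ¬ R.IsPos (β + γ) ∧ ¬ R.IsPos (β - γ) ∧ ¬ R.IsPos (γ - β) := by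
  have htrans := hlt.1.2.1
  have htransB := hltB.1.2.1
  have hconv := hlt.1.2.2.2
  have hconvB := hltB.1.2.2.2
  have asym : ∀ a c, lt a c → lt c a → False := fun a c h h' => R.adm_asym hlt h h'
  have asymB : ∀ a c, ltB a c → ltB c a → False := fun a c h h' => R.adm_asym hltB h h'
  have hβγ : β ≠ γ := fun h => hlt.1.1 β (h ▸ h12)
  set b := R.B β β with hbdef
  set g := R.B γ γ with hgdef
  set m := R.B β γ with hmdef
  have hb : 0 < b := R.B_pos β hβp.1
  have hg : 0 < g := R.B_pos γ hγp.1
  have hβw : R.B β ϖ = b / 2 := R.lev1 k ϖ J hfund hmin hJ hβp hβs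
  have hγw : R.B γ ϖ = g / 2 := R.lev1 k ϖ J hfund hmin hJ hγp hγs
  -- Two basic contradictions from a difference in the span.
  have HF1 : R.IsPos (β - γ) → (β - γ) ∈ Submodule.span ℚ (R.α '' J) → False := by
    intro hd hs
    have hc := hconvB γ (β - γ) hγp hd (by rw [show γ + (β - γ) = β from by abel]; exact hβp)
    rw [show γ + (β - γ) = β from by abel] at hc
    rcases hc with ⟨h1, h2⟩ | ⟨h1, h2⟩
    · exact asymB _ _ h2 (hltB.2.1 (β - γ) β hd hs hβp hβs)
    · exact asymB _ _ h2 h21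
  have HF2 : R.IsPos (γ - β) → (γ - β) ∈ Submodule.span ℚ (R.α '' J) → False := by
    intro hd hs
    have hc := hconv β (γ - β) hβp hd (by rw [show β + (γ - β) = γ from by abel]; exact hγp)
    rw [show β + (γ - β) = γ from by abel] at hc
    rcases hc with ⟨h1, h2⟩ | ⟨h1, h2⟩
    · exact asym _ _ h2 (hlt.2.1 (γ - β) γ hd hs hγp hγs)
    · exact asym _ _ h2 h12
  have Hsum : ¬ R.IsPos (β + γ) := by
    intro hpos
    rcases hconv β γ hβp hγp hpos with ⟨h1, h2⟩ | ⟨h1, h2⟩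
    · exact hadj (β + γ) hpos h1 h2
    · exact asym _ _ (htrans _ _ _ h1 h2) h12
  rcases eq_or_ne m 0 with hm0 | hmne
  · -- orthogonal case: conclusion holds
    refine ⟨hm0, Hsum, ?_, ?_⟩
    · intro hd
      have hw : R.B (β - γ) ϖ = b/2 - g/2 := by
        rw [map_sub, LinearMap.sub_apply, hβw, hγw]
      have hBB : R.B (β - γ) (β - γ) = b + g := by
        simp only [map_sub, LinearMap.sub_apply]
        rw [R.B_symm γ β, ← hmdef, hm0, ← hbdef, ← hgdef]
        ring
      have hbg : b = g := by
        have hmm := hmin (β - γ) hd.1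
        rw [coroot, hBB, hw] at hmm
        simp only [Set.mem_insert_iff, Set.mem_singleton_iff] at hmm
        have hbgne : b + g ≠ 0 := by linarith
        rcases hmm with h | h | h
        · exfalso; field_simp [hbgne] at h; linarith
        · rw [div_eq_zero_iff] at h
          rcases h with h | h
          · linarith
          · exfalso; linarith
        · exfalso; field_simp [hbgne] at h; linarith
      have hs : (β - γ) ∈ Submodule.span ℚ (R.α '' J) :=
        R.pos_B_zero_mem k ϖ J hfund hJ hd (by rw [hw, hbg]; ring)
      exact HF1 hd hs
    · intro hd
      have hw : R.B (γ - β) ϖ = g/2 - b/2 := by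
        rw [map_sub, LinearMap.sub_apply, hβw, hγw]
      have hBB : R.B (γ - β) (γ - β) = b + g := by
        simp only [map_sub, LinearMap.sub_apply]
        rw [R.B_symm γ β, ← hmdef, hm0, ← hbdef, ← hgdef]
        ring
      have hbg : b = g := by
        have hmm := hmin (γ - β) hd.1
        rw [coroot, hBB, hw] at hmm
        simp only [Set.mem_insert_iff, Set.mem_singleton_iff] at hmm
        have hbgne : b + g ≠ 0 := by linarith
        rcases hmm with h | h | h
        · exfalso; field_simp [hbgne] at h; linarith
        · rw [div_eq_zero_iff] at h
          rcases h with h | h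
          · linarith
          · exfalso; linarith
        · exfalso; field_simp [hbgne] at h; linarith
      have hs : (γ - β) ∈ Submodule.span ℚ (R.α '' J) :=
        R.pos_B_zero_mem k ϖ J hfund hJ hd (by rw [hw, hbg]; ring)
      exact HF2 hd hs
  · -- nonorthogonal: contradiction
    exfalso
    have hcg := R.cartan_range k ϖ J hfund hmin hJ hβp hβs hγp hγs
    have hcb := R.cartan_range k ϖ J hfund hmin hJ hγp hγs hβp hβs
    rw [R.B_symm γ β] at hcb
    rw [← hmdef, ← hgdef] at hcg
    rw [← hmdef, ← hbdef] at hcb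
    have hgne : g ≠ 0 := ne_of_gt hg
    have hbne : b ≠ 0 := ne_of_gt hb
    have hcg' : 2*m = g ∨ m = g := by
      rcases hcg with h | h | h
      · exfalso; rw [div_eq_zero_iff] at h; rcases h with h | h
        · exact hmne (by linarith)
        · exact hgne h
      · left; field_simp at h; linarith
      · right; field_simp at h; linarith
    have hcb' : 2*m = b ∨ m = b := by
      rcases hcb with h | h | h
      · exfalso; rw [div_eq_zero_iff] at h; rcases h with h | h
        · exact hmne (by linarith)
        · exact hbne h
      · left; field_simp at h; linarith
      · right; field_simp at h; linarith
    have hmpos : 0 < m := by rcases hcb' with h | h <;> linarith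
    -- reflected roots
    have hrβγ_root : R.isRoot (R.rmap β γ) := by
      rw [← R.toLin_refl hβp.1]; exact R.root_inv _ _ hγp.1
    have hrγβ_root : R.isRoot (R.rmap γ β) := by
      rw [← R.toLin_refl hγp.1]; exact R.root_inv _ _ hβp.1
    have hrβγ_eq : R.rmap β γ = γ - (2*m/b) • β := by rw [rmap_apply]
    have hrγβ_eq : R.rmap γ β = β - (2*m/g) • γ := by
      rw [rmap_apply, R.B_symm γ β]
    rcases hcb' with hb2 | hb1
    · rcases hcg' with hg2 | hg1
      · -- (cb, cg) = (1,1) : b = 2m, g = 2m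
        have hδroot : R.isRoot (β - γ) := by
          have : R.rmap γ β = β - γ := by
            rw [hrγβ_eq, show 2*m/g = 1 from by rw [← hg2]; field_simp, one_smul]
          rwa [this] at hrγβ_root
        have hδw : R.B (β - γ) ϖ = 0 := by
          rw [map_sub, LinearMap.sub_apply, hβw, hγw, ← hb2, ← hg2]; ring
        rcases R.pos_or_negpos hδroot with hd | hd
        · exact HF1 hd (R.pos_B_zero_mem k ϖ J hfund hJ hd hδw)
        · rw [neg_sub] at hd
          have hδw' : R.B (γ - β) ϖ = 0 := by
            rw [map_sub, LinearMap.sub_apply, hβw, hγw, ← hb2, ← hg2]; ring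
          exact HF2 hd (R.pos_B_zero_mem k ϖ J hfund hJ hd hδw')
      · -- (cb, cg) = (1,2) : b = 2m, g = m
        have hρroot : R.isRoot (γ - β) := by
          have : R.rmap β γ = γ - β := by
            rw [hrβγ_eq, show 2*m/b = 1 from by rw [← hb2]; field_simp, one_smul]
          rwa [this] at hrβγ_root
        have hρnpos : ¬ R.IsPos (γ - β) := by
          intro hp
          have := R.pos_B_nonneg k ϖ hfund hp
          rw [map_sub, LinearMap.sub_apply, hβw, hγw, ← hb2, ← hg1] at this
          linarith
        have hρ : R.IsPos (β - γ) := by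
          rcases R.pos_or_negpos hρroot with hp | hp
          · exact absurd hp hρnpos
          · rwa [neg_sub] at hp
        have hρw : R.B (β - γ) ϖ = m/2 := by
          rw [map_sub, LinearMap.sub_apply, hβw, hγw, ← hb2, ← hg1]; ring
        have hρs : (β - γ) ∉ Submodule.span ℚ (R.α '' J) := by
          intro hmem
          have := R.span_B_zero k ϖ J hfund hJ hmem
          rw [hρw] at this; linarith
        have hδ2root : R.isRoot (β - (2:ℚ) • γ) := by
          have : R.rmap γ β = β - (2:ℚ) • γ := by
            rw [hrγβ_eq, show 2*m/g = 2 from by rw [← hg1]; field_simp]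
          rwa [this] at hrγβ_root
        have hδ2w : R.B (β - (2:ℚ) • γ) ϖ = 0 := by
          rw [map_sub, LinearMap.sub_apply, map_smul, LinearMap.smul_apply, smul_eq_mul,
            hβw, hγw, ← hb2, ← hg1]; ring
        rcases R.pos_or_negpos hδ2root with hd | hd
        · -- β - 2γ positive, in span
          have hs := R.pos_B_zero_mem k ϖ J hfund hJ hd hδ2w
          have l1 : ltB β (β - γ) := by
            have hc := hconvB γ (β - γ) hγp hρ
              (by rw [show γ + (β - γ) = β from by abel]; exact hβp)
            rw [show γ + (β - γ) = β from by abel] at hc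
            rcases hc with ⟨h1, h2⟩ | ⟨h1, h2⟩
            · exact h2
            · exact absurd h2 (fun h => asymB _ _ h h21)
          have l2 : ltB (β - γ) γ := by
            have hc := hconvB γ (β - (2:ℚ) • γ) hγp hd
              (by rw [show γ + (β - (2:ℚ) • γ) = β - γ from by module]; exact hρ)
            rw [show γ + (β - (2:ℚ) • γ) = β - γ from by module] at hc
            rcases hc with ⟨h1, h2⟩ | ⟨h1, h2⟩
            · exact absurd h2 (fun h => asymB _ _ h (hltB.2.1 _ _ hd hs hρ hρs))
            · exact h2
          exact asymB _ _ (htransB _ _ _ l1 l2) h21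
        · -- 2γ - β positive, in span
          rw [show -(β - (2:ℚ) • γ) = (2:ℚ) • γ - β from by abel] at hd
          have hδ2w' : R.B ((2:ℚ) • γ - β) ϖ = 0 := by
            rw [map_sub, LinearMap.sub_apply, map_smul, LinearMap.smul_apply, smul_eq_mul,
              hβw, hγw, ← hb2, ← hg1]; ring
          have hs := R.pos_B_zero_mem k ϖ J hfund hJ hd hδ2w'
          have l1 : lt γ (β - γ) := by
            have hc := hconv (β - γ) ((2:ℚ) • γ - β) hρ hd
              (by rw [show (β - γ) + ((2:ℚ) • γ - β) = γ from by module]; exact hγp)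
            rw [show (β - γ) + ((2:ℚ) • γ - β) = γ from by module] at hc
            rcases hc with ⟨h1, h2⟩ | ⟨h1, h2⟩
            · exact absurd h2 (fun h => asym _ _ h (hlt.2.1 _ _ hd hs hγp hγs))
            · exact h2
          have l2 : lt (β - γ) β := by
            have hc := hconv γ (β - γ) hγp hρ
              (by rw [show γ + (β - γ) = β from by abel]; exact hβp)
            rw [show γ + (β - γ) = β from by abel] at hc
            rcases hc with ⟨h1, h2⟩ | ⟨h1, h2⟩
            · exact absurd h1 (fun h => asym _ _ h h12)
            · exact h1
          exact asym _ _ (htrans _ _ _ l1 l2) h12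
    · rcases hcg' with hg2 | hg1
      · -- (cb, cg) = (2,1) : b = m, g = 2m
        have hρroot : R.isRoot (β - γ) := by
          have : R.rmap γ β = β - γ := by
            rw [hrγβ_eq, show 2*m/g = 1 from by rw [← hg2]; field_simp, one_smul]
          rwa [this] at hrγβ_root
        have hρnpos : ¬ R.IsPos (β - γ) := by
          intro hp
          have := R.pos_B_nonneg k ϖ hfund hp
          rw [map_sub, LinearMap.sub_apply, hβw, hγw, ← hb1, ← hg2] at this
          linarith
        have hρ : R.IsPos (γ - β) := by
          rcases R.pos_or_negpos hρroot with hp | hp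
          · exact absurd hp hρnpos
          · rwa [neg_sub] at hp
        have hρw : R.B (γ - β) ϖ = m/2 := by
          rw [map_sub, LinearMap.sub_apply, hβw, hγw, ← hb1, ← hg2]; ring
        have hρs : (γ - β) ∉ Submodule.span ℚ (R.α '' J) := by
          intro hmem
          have := R.span_B_zero k ϖ J hfund hJ hmem
          rw [hρw] at this; linarith
        have hδ2root : R.isRoot (γ - (2:ℚ) • β) := by
          have : R.rmap β γ = γ - (2:ℚ) • β := by
            rw [hrβγ_eq, show 2*m/b = 2 from by rw [← hb1]; field_simp]
          rwa [this] at hrβγ_root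
        have hδ2w : R.B (γ - (2:ℚ) • β) ϖ = 0 := by
          rw [map_sub, LinearMap.sub_apply, map_smul, LinearMap.smul_apply, smul_eq_mul,
            hβw, hγw, ← hb1, ← hg2]; ring
        rcases R.pos_or_negpos hδ2root with hd | hd
        · -- γ - 2β positive, in span
          have hs := R.pos_B_zero_mem k ϖ J hfund hJ hd hδ2w
          have l1 : lt (γ - β) β := by
            have hc := hconv β (γ - (2:ℚ) • β) hβp hd
              (by rw [show β + (γ - (2:ℚ) • β) = γ - β from by module]; exact hρ)
            rw [show β + (γ - (2:ℚ) • β) = γ - β from by module] at hc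
            rcases hc with ⟨h1, h2⟩ | ⟨h1, h2⟩
            · exact absurd h2 (fun h => asym _ _ h (hlt.2.1 _ _ hd hs hρ hρs))
            · exact h2
          have l2 : lt γ (γ - β) := by
            have hc := hconv β (γ - β) hβp hρ
              (by rw [show β + (γ - β) = γ from by abel]; exact hγp)
            rw [show β + (γ - β) = γ from by abel] at hc
            rcases hc with ⟨h1, h2⟩ | ⟨h1, h2⟩
            · exact h2
            · exact absurd h2 (fun h => asym _ _ h h12)
          exact asym _ _ (htrans _ _ _ l2 l1) h12
        · -- 2β - γ positive, in span
          rw [show -(γ - (2:ℚ) • β) = (2:ℚ) • β - γ from by abel] at hd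
          have hδ2w' : R.B ((2:ℚ) • β - γ) ϖ = 0 := by
            rw [map_sub, LinearMap.sub_apply, map_smul, LinearMap.smul_apply, smul_eq_mul,
              hβw, hγw, ← hb1, ← hg2]; ring
          have hs := R.pos_B_zero_mem k ϖ J hfund hJ hd hδ2w'
          have l1 : ltB (γ - β) γ := by
            have hc := hconvB β (γ - β) hβp hρ
              (by rw [show β + (γ - β) = γ from by abel]; exact hγp)
            rw [show β + (γ - β) = γ from by abel] at hc
            rcases hc with ⟨h1, h2⟩ | ⟨h1, h2⟩
            · exact absurd h1 (fun h => asymB _ _ h h21)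
            · exact h1
          have l2 : ltB β (γ - β) := by
            have hc := hconvB (γ - β) ((2:ℚ) • β - γ) hρ hd
              (by rw [show (γ - β) + ((2:ℚ) • β - γ) = β from by module]; exact hβp)
            rw [show (γ - β) + ((2:ℚ) • β - γ) = β from by module] at hc
            rcases hc with ⟨h1, h2⟩ | ⟨h1, h2⟩
            · exact absurd h2 (fun h => asymB _ _ h (hltB.2.1 _ _ hd hs hβp hβs))
            · exact h2
          exact asymB _ _ (htransB _ _ _ l2 l1) h21
      · -- (cb, cg) = (2,2) : b = m, g = m
        exact R.same_length_pair_absurd hβp.1 hγp.1 hβγ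
          (by rw [← hmdef, ← hbdef]; linarith)
          (by rw [← hgdef, ← hbdef]; linarith)

end RootSystemData
namespace RootSystemData

variable {I : Type} [Fintype I] [DecidableEq I] (R : RootSystemData I)

lemma bgpath_nil {x w : R.W} : BGPath R x [] w ↔ x = w := Iff.rfl

lemma bgpath_cons {x w : R.W} {a : R.V} {t : List R.V} :
    BGPath R x (a :: t) w ↔ R.BruhatEdge x a ∧ BGPath R (x * R.refl a) t w := Iff.rfl

lemma chain'_congr {α : Type*} {lt lt' : α → α → Prop} (L : List α)
    (h : ∀ p ∈ L, ∀ q ∈ L, lt p q ↔ lt' p q) : L.Chain' lt ↔ L.Chain' lt' := by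
  induction L with
  | nil => simp [List.Chain']
  | cons a t ih =>
      cases t with
      | nil => simp [List.Chain']
      | cons b t' =>
          simp only [List.Chain', List.isChain_cons_cons]
          have hab : lt a b ↔ lt' a b := h a (by simp) b (by simp)
          have ht := ih (fun p hp q hq =>
            h p (List.mem_cons_of_mem _ hp) q (List.mem_cons_of_mem _ hq))
          exact and_congr hab ht

lemma chain'_rel {α : Type*} {lt : α → α → Prop}
    (htrans : ∀ a b c, lt a b → lt b c → lt a c) :
    ∀ (t : List α) (a : α), (a :: t).Chain' lt → ∀ r ∈ t, lt a r := by
  intro t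
  induction t with
  | nil => intro a _ r hr; cases hr
  | cons b t' ih =>
      intro a hc r hr
      simp only [List.Chain', List.isChain_cons_cons] at hc
      rcases List.mem_cons.mp hr with rfl | hr'
      · exact hc.1
      · exact htrans _ _ _ hc.1 (ih b hc.2 r hr')

/-- The set of endpoints of increasing paths. -/
def eds (J : Set I) (y : R.W) (lt : R.V → R.V → Prop) : Set R.W :=
  {w : R.W | ∃ labels : List R.V,
      (∀ β ∈ labels, R.IsPos β ∧ β ∉ Submodule.span ℚ (R.α '' J)) ∧
      labels.Chain' lt ∧ BGPath R y labels w}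

/-- Core rewriting step: paths increasing for `lt` can be transformed into
paths increasing for the order `lt'` obtained by transposing the adjacent
pair `(β, γ)`. -/
lemma swap_path {β γ : R.V} {lt lt' : R.V → R.V → Prop}
    (hirr : ∀ a, ¬ lt a a) (htrans : ∀ a b c, lt a b → lt b c → lt a c)
    (h12 : lt β γ) (ho : R.B β γ = 0)
    (hiff : ∀ p q, lt' p q ↔ ((p = γ ∧ q = β) ∨ (¬(p = β ∧ q = γ) ∧ lt p q))) :
    ∀ (L : List R.V) (x w : R.W), BGPath R x L w → L.Chain' lt →
    ∃ L', BGPath R x L' w ∧ L'.Chain' lt' ∧ (∀ δ, δ ∈ L' → δ ∈ L) ∧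
      (L'.head? = L.head? ∨ (L.head? = some β ∧ L'.head? = some γ)) := by
  intro L
  induction L with
  | nil =>
      intro x w hp _
      exact ⟨[], hp, by simp [List.Chain'], by simp, Or.inl rfl⟩
  | cons a t ih =>
      intro x w hp hc
      obtain ⟨ha_edge, hp'⟩ := (R.bgpath_cons).mp hp
      cases t with
      | nil =>
          refine ⟨[a], hp, by simp [List.Chain'], by simp, Or.inl rfl⟩
      | cons b rest =>
          obtain ⟨hb_edge, hp''⟩ := (R.bgpath_cons).mp hp'
          simp only [List.Chain', List.isChain_cons_cons] at hc
          by_cases hab : a = β ∧ b = γ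
          · -- swap the first two labels
            have hoab : R.B a b = 0 := by rw [hab.1, hab.2]; exact ho
            obtain ⟨e1, e2, hcomm⟩ := R.diamond ha_edge hb_edge hoab
            have hbrest : ∀ r ∈ rest, lt b r := chain'_rel htrans rest b hc.2
            have harest : ∀ r ∈ rest, lt a r :=
              fun r hr => htrans _ _ _ hc.1 (hbrest r hr)
            have hrest_ne : ∀ r ∈ rest, r ≠ β ∧ r ≠ γ := by
              intro r hr
              constructor
              · intro hrβ
                have hra : r = a := hrβ.trans hab.1.symm
                exact hirr a (hra ▸ harest r hr)
              · intro hrγ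
                have hrb : r = b := hrγ.trans hab.2.symm
                exact hirr b (hrb ▸ hbrest r hr)
            refine ⟨b :: a :: rest, ?_, ?_, ?_, ?_⟩
            · rw [R.bgpath_cons]
              refine ⟨e1, ?_⟩
              rw [R.bgpath_cons]
              refine ⟨e2, ?_⟩
              rw [← hcomm]
              exact hp''
            · simp only [List.Chain', List.isChain_cons_cons]
              constructor
              · rw [hiff]; exact Or.inl ⟨hab.2, hab.1⟩
              · cases rest with
                | nil => simp
                | cons c rest' =>
                    rw [List.isChain_cons_cons]
                    constructor
                    · rw [hiff]
                      right
                      refine ⟨?_, harest c (by simp)⟩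
                      intro hh
                      exact (hrest_ne c (by simp)).2 hh.2
                    · have hcc' : (c :: rest').Chain' lt := by
                        have h2 := hc.2
                        rw [List.isChain_cons_cons] at h2
                        exact h2.2
                      refine (chain'_congr (c :: rest') ?_).mp hcc'
                      intro p hpmem q hqmem
                      rw [hiff]
                      constructor
                      · intro h
                        exact Or.inr ⟨fun hh => (hrest_ne p hpmem).1 hh.1, h⟩
                      · rintro (⟨hpγ, -⟩ | h)
                        · exact absurd hpγ (hrest_ne p hpmem).2
                        · exact h.2
            · intro δ hδ
              simp only [List.mem_cons] at hδ ⊢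
              tauto
            · right
              refine ⟨?_, ?_⟩
              · rw [List.head?_cons, hab.1]
              · rw [List.head?_cons, hab.2]
          · obtain ⟨T', hTpath, hTchain, hTsub, hThead⟩ :=
              ih (x * R.refl a) w hp' hc.2
            refine ⟨a :: T', ?_, ?_, ?_, Or.inl rfl⟩
            · rw [R.bgpath_cons]; exact ⟨ha_edge, hTpath⟩
            · simp only [List.Chain', List.isChain_cons]
              refine ⟨?_, hTchain⟩
              intro z hz
              rcases hThead with hh | ⟨hh1, hh2⟩
              · rw [hh] at hz
                simp only [List.head?_cons, Option.mem_def, Option.some_inj] at hz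
                subst hz
                rw [hiff]
                exact Or.inr ⟨hab, hc.1⟩
              · simp only [List.head?_cons, Option.some_inj] at hh1
                rw [hh2] at hz
                simp only [Option.mem_def, Option.some_inj] at hz
                subst hz
                have haβ : a ≠ β := by
                  intro haβ
                  apply hirr a
                  have : lt a β := hh1 ▸ hc.1
                  rwa [← haβ] at this
                rw [hiff]
                refine Or.inr ⟨fun hh => haβ hh.1, ?_⟩
                have h1 : lt a β := hh1 ▸ hc.1
                exact htrans _ _ _ h1 h12
            · intro δ hδ
              rcases List.mem_cons.mp hδ with rfl | hδ'
              · exact List.mem_cons_self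
              · exact List.mem_cons_of_mem _ (hTsub δ hδ')

open Classical in
/-- The set of discordant pairs between two orders. -/
noncomputable def discord (J : Set I) (lt ltB : R.V → R.V → Prop) : Finset (R.V × R.V) :=
  (R.posFinset ×ˢ R.posFinset).filter fun z =>
    z.1 ∉ Submodule.span ℚ (R.α '' J) ∧ z.2 ∉ Submodule.span ℚ (R.α '' J) ∧
    lt z.1 z.2 ∧ ltB z.2 z.1

lemma mem_posFinset {δ : R.V} : δ ∈ R.posFinset ↔ R.IsPos δ := by
  rw [posFinset, Set.Finite.mem_toFinset]
  rfl

lemma mem_discord {J : Set I} {lt ltB : R.V → R.V → Prop} {p q : R.V} :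
    (p, q) ∈ R.discord J lt ltB ↔
      R.IsPos p ∧ R.IsPos q ∧ p ∉ Submodule.span ℚ (R.α '' J) ∧
      q ∉ Submodule.span ℚ (R.α '' J) ∧ lt p q ∧ ltB q p := by
  classical
  rw [discord, Finset.mem_filter, Finset.mem_product, mem_posFinset, mem_posFinset]
  tauto

lemma exists_adj_discord {J : Set I} {lt ltB : R.V → R.V → Prop}
    (hlt : R.Adm J lt) (hltB : R.Adm J ltB)
    (hne : (R.discord J lt ltB).Nonempty) :
    ∃ β γ, (β, γ) ∈ R.discord J lt ltB ∧
      ∀ ρ, R.IsPos ρ → ρ ∉ Submodule.span ℚ (R.α '' J) → lt β ρ → lt ρ γ → False := by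
  classical
  obtain ⟨⟨p, q⟩, hpq⟩ := hne
  set Btw : R.V → R.V → Finset R.V := fun u v =>
    R.posFinset.filter fun ρ =>
      ρ ∉ Submodule.span ℚ (R.α '' J) ∧ lt u ρ ∧ lt ρ v with hBtw
  suffices H : ∀ n (u v : R.V), (Btw u v).card = n → (u, v) ∈ R.discord J lt ltB →
      ∃ β γ, (β, γ) ∈ R.discord J lt ltB ∧
        ∀ ρ, R.IsPos ρ → ρ ∉ Submodule.span ℚ (R.α '' J) → lt β ρ → lt ρ γ → False by
    exact H _ p q rfl hpq
  intro n
  induction n using Nat.strong_induction_on with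
  | _ n ihn =>
      intro u v hcard hmem
      rcases Finset.eq_empty_or_nonempty (Btw u v) with he | ⟨ρ, hρ⟩
      · refine ⟨u, v, hmem, ?_⟩
        intro ρ hρp hρs h1 h2
        refine Finset.eq_empty_iff_forall_notMem.mp he ρ ?_
        rw [hBtw]
        simp only [Finset.mem_filter, mem_posFinset]
        exact ⟨hρp, hρs, h1, h2⟩
      · have hρ' : R.IsPos ρ ∧ (ρ ∉ Submodule.span ℚ (R.α '' J) ∧ lt u ρ ∧ lt ρ v) := by
          have := hρ
          rw [hBtw, Finset.mem_filter, mem_posFinset] at this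
          exact ⟨this.1, this.2⟩
        have hρp := hρ'.1
        have hρs := hρ'.2.1
        have huρ := hρ'.2.2.1
        have hρv := hρ'.2.2.2
        rw [mem_discord] at hmem
        obtain ⟨hup, hvp, hus, hvs, huv, hvu⟩ := hmem
        have hρu : ρ ≠ u := fun h => hlt.1.1 u (h ▸ huρ)
        rcases hltB.1.2.2.1 ρ u hρp hup hρu with hB | hB
        ·
          -- totality gives ltB ρ u ∨ ltB u ρ
          have hmem' : (u, ρ) ∈ R.discord J lt ltB := by
            rw [mem_discord]; exact ⟨hup, hρp, hus, hρs, huρ, hB⟩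
          have hss : Btw u ρ ⊂ Btw u v := by
            constructor
            · intro σ hσ
              rw [hBtw, Finset.mem_filter] at hσ ⊢
              exact ⟨hσ.1, hσ.2.1, hσ.2.2.1, hlt.1.2.1 _ _ _ hσ.2.2.2 hρv⟩
            · intro hsub
              have : ρ ∈ Btw u ρ := hsub hρ
              rw [hBtw, Finset.mem_filter] at this
              exact hlt.1.1 ρ this.2.2.2
          exact ihn _ (hcard ▸ Finset.card_lt_card hss) u ρ rfl hmem'
        · have hvρ : ltB v ρ := hltB.1.2.1 _ _ _ hvu hB
          have hmem' : (ρ, v) ∈ R.discord J lt ltB := by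
            rw [mem_discord]; exact ⟨hρp, hvp, hρs, hvs, hρv, hvρ⟩
          have hss : Btw ρ v ⊂ Btw u v := by
            constructor
            · intro σ hσ
              rw [hBtw, Finset.mem_filter] at hσ ⊢
              exact ⟨hσ.1, hσ.2.1, hlt.1.2.1 _ _ _ huρ hσ.2.2.1, hσ.2.2.2⟩
            · intro hsub
              have : ρ ∈ Btw ρ v := hsub hρ
              rw [hBtw, Finset.mem_filter] at this
              exact hlt.1.1 ρ this.2.2.1
          exact ihn _ (hcard ▸ Finset.card_lt_card hss) ρ v rfl hmem'

end RootSystemData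
namespace RootSystemData

variable {I : Type} [Fintype I] [DecidableEq I] (R : RootSystemData I)

/-- The order obtained by transposing the adjacent pair `(β, γ)`. -/
def swapOrd (lt : R.V → R.V → Prop) (β γ : R.V) : R.V → R.V → Prop :=
  fun p q => (p = γ ∧ q = β) ∨ (¬(p = β ∧ q = γ) ∧ lt p q)

lemma swapOrd_adm {J : Set I} {lt : R.V → R.V → Prop} {β γ : R.V} (hlt : R.Adm J lt)
    (hβp : R.IsPos β) (hβs : β ∉ Submodule.span ℚ (R.α '' J))
    (hγp : R.IsPos γ) (hγs : γ ∉ Submodule.span ℚ (R.α '' J))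
    (h12 : lt β γ)
    (hadj : ∀ ρ, R.IsPos ρ → lt β ρ → lt ρ γ → False)
    (hsum : ¬ R.IsPos (β + γ)) (hd1 : ¬ R.IsPos (β - γ)) (hd2 : ¬ R.IsPos (γ - β)) :
    R.Adm J (R.swapOrd lt β γ) := by
  obtain ⟨⟨hir, htr, hto, hcv⟩, hcJ, hres⟩ := hlt
  have hβγ : β ≠ γ := fun h => hir β (h ▸ h12)
  refine ⟨⟨?_, ?_, ?_, ?_⟩, ?_, ?_⟩
  · -- irreflexive
    rintro p (⟨h1, h2⟩ | ⟨-, h2⟩)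
    · exact hβγ (h2.symm.trans h1)
    · exact hir p h2
  · -- transitive
    rintro x y z (⟨hx, hy⟩ | ⟨hne1, hxy⟩) (⟨hy', hz⟩ | ⟨hne2, hyz⟩)
    · exact (hβγ (hy.symm.trans hy')).elim
    · -- x = γ, y = β, lt y z
      have hyβ : lt β z := by rw [← hy]; exact hyz
      have hzγ : z ≠ γ := fun h => hne2 ⟨hy, h⟩
      have hzp : R.IsPos z := (hres _ _ hyβ).2
      rcases hto γ z hγp hzp (fun h => hzγ h.symm) with h | h
      · exact Or.inr ⟨fun hh => hβγ (hx.symm.trans hh.1).symm, by rw [hx]; exact h⟩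
      · exact (hadj z hzp hyβ h).elim
    · -- lt x y, y = γ, z = β
      have hxγlt : lt x γ := by rw [← hy']; exact hxy
      have hxβ : x ≠ β := fun h => hne1 ⟨h, hy'⟩
      have hxp : R.IsPos x := (hres _ _ hxy).1
      rcases hto x β hxp hβp hxβ with h | h
      · exact Or.inr ⟨fun hh => hxβ hh.1, by rw [hz]; exact h⟩
      · exact (hadj x hxp h hxγlt).elim
    · refine Or.inr ⟨?_, htr _ _ _ hxy hyz⟩
      intro hh
      exact hadj y (hres _ _ hxy).2 (by rw [← hh.1]; exact hxy) (by rw [← hh.2]; exact hyz)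
  · -- total
    intro p q hp hq hne
    by_cases h1 : p = β ∧ q = γ
    · exact Or.inr (Or.inl ⟨h1.2, h1.1⟩)
    by_cases h2 : p = γ ∧ q = β
    · exact Or.inl (Or.inl h2)
    rcases hto p q hp hq hne with h | h
    · exact Or.inl (Or.inr ⟨h1, h⟩)
    · exact Or.inr (Or.inr ⟨fun hh => h2 ⟨hh.2, hh.1⟩, h⟩)
  · -- convex
    intro p q hp hq hs
    rcases hcv p q hp hq hs with ⟨u1, u2⟩ | ⟨u1, u2⟩
    · refine Or.inl ⟨Or.inr ⟨?_, u1⟩, Or.inr ⟨?_, u2⟩⟩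
      · intro hh
        apply hd2
        have hq' : q = γ - β := by rw [← hh.2, ← hh.1]; abel
        rwa [hq'] at hq
      · intro hh
        apply hd1
        have hp' : p = β - γ := by rw [← hh.1, ← hh.2]; abel
        rwa [hp'] at hp
    · refine Or.inr ⟨Or.inr ⟨?_, u1⟩, Or.inr ⟨?_, u2⟩⟩
      · intro hh
        apply hd2
        have hp' : p = γ - β := by rw [← hh.2, ← hh.1]; abel
        rwa [hp'] at hp
      · intro hh
        apply hd1
        have hq' : q = β - γ := by rw [← hh.1, ← hh.2]; abel
        rwa [hq'] at hq
  · -- span-initial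
    intro p q hp hps hq hqs
    exact Or.inr ⟨fun hh => hβs (hh.1 ▸ hps), hcJ p q hp hps hq hqs⟩
  · -- positivity restriction
    rintro p q (⟨h1, h2⟩ | ⟨-, h⟩)
    · exact ⟨h1 ▸ hγp, h2 ▸ hβp⟩
    · exact hres _ _ h

open Classical in
lemma discord_swap {J : Set I} {lt ltB : R.V → R.V → Prop} {β γ : R.V}
    (hltB : R.Adm J ltB) (hmem : (β, γ) ∈ R.discord J lt ltB) :
    R.discord J (R.swapOrd lt β γ) ltB = (R.discord J lt ltB).erase (β, γ) := by
  classical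
  have h21 : ltB γ β := (R.mem_discord.mp hmem).2.2.2.2.2
  have hnB : ¬ ltB β γ := fun h => R.adm_asym hltB h h21
  ext z
  obtain ⟨p, q⟩ := z
  rw [Finset.mem_erase, R.mem_discord, R.mem_discord]
  constructor
  · rintro ⟨hp, hq, hps, hqs, hlt', hBqp⟩
    rcases hlt' with ⟨h1, h2⟩ | ⟨h1, h2⟩
    · exfalso
      apply hnB
      rw [← h2, ← h1]
      exact hBqp
    · refine ⟨?_, hp, hq, hps, hqs, h2, hBqp⟩
      intro hh
      rw [Prod.mk.injEq] at hh
      exact h1 hh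
  · rintro ⟨hne, hp, hq, hps, hqs, hl, hBqp⟩
    refine ⟨hp, hq, hps, hqs, Or.inr ⟨?_, hl⟩, hBqp⟩
    intro hh
    apply hne
    rw [Prod.mk.injEq]
    exact hh

lemma eds_swapOrd {J : Set I} (y : R.W) {lt : R.V → R.V → Prop} {β γ : R.V}
    (hlt : R.Adm J lt) (hlt' : R.Adm J (R.swapOrd lt β γ))
    (h12 : lt β γ) (ho : R.B β γ = 0) :
    R.eds J y lt = R.eds J y (R.swapOrd lt β γ) := by
  have hirr := hlt.1.1
  have htrans := hlt.1.2.1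
  have hβγ : β ≠ γ := fun h => hirr β (h ▸ h12)
  apply Set.Subset.antisymm
  · rintro w ⟨L, hout, hchain, hpath⟩
    obtain ⟨L', hp', hc', hsub, -⟩ :=
      R.swap_path hirr htrans h12 ho (fun p q => Iff.rfl) L y w hpath hchain
    exact ⟨L', fun δ hδ => hout δ (hsub δ hδ), hc', hp'⟩
  · rintro w ⟨L, hout, hchain, hpath⟩
    have hirr' := hlt'.1.1
    have htrans' := hlt'.1.2.1
    have h12' : R.swapOrd lt β γ γ β := Or.inl ⟨rfl, rfl⟩
    have ho' : R.B γ β = 0 := by rw [R.B_symm]; exact ho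
    have hiff' : ∀ p q, lt p q ↔
        ((p = β ∧ q = γ) ∨ (¬(p = γ ∧ q = β) ∧ R.swapOrd lt β γ p q)) := by
      intro p q
      constructor
      · intro h
        by_cases h1 : p = β ∧ q = γ
        · exact Or.inl h1
        · refine Or.inr ⟨?_, Or.inr ⟨h1, h⟩⟩
          rintro ⟨rfl, rfl⟩
          exact R.adm_asym hlt h h12
      · rintro (⟨rfl, rfl⟩ | ⟨hne, hsw⟩)
        · exact h12
        · rcases hsw with ⟨hh1, hh2⟩ | ⟨-, h⟩
          · exact absurd ⟨hh1, hh2⟩ hne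
          · exact h
    obtain ⟨L', hp', hc', hsub, -⟩ :=
      R.swap_path hirr' htrans' h12' ho' hiff' L y w hpath hchain
    exact ⟨L', fun δ hδ => hout δ (hsub δ hδ), hc', hp'⟩

lemma eds_eq_of_card (k : I) (ϖ : R.V) (J : Set I)
    (hfund : R.IsFundamental k ϖ) (hmin : R.IsMinuscule ϖ) (hJ : J = {i | i ≠ k})
    (y : R.W) {ltB : R.V → R.V → Prop} (hltB : R.Adm J ltB) :
    ∀ n (lt : R.V → R.V → Prop), R.Adm J lt → (R.discord J lt ltB).card = n →
      R.eds J y lt = R.eds J y ltB := by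
  intro n
  induction n using Nat.strong_induction_on with
  | _ n ihn =>
  intro lt hlt hcard
  rcases Nat.eq_zero_or_pos n with rfl | hpos
  · have hd : R.discord J lt ltB = ∅ := Finset.card_eq_zero.mp hcard
    have hagree : ∀ p q, R.IsPos p → p ∉ Submodule.span ℚ (R.α '' J) →
        R.IsPos q → q ∉ Submodule.span ℚ (R.α '' J) → (lt p q ↔ ltB p q) := by
      intro p q hp hps hq hqs
      constructor
      · intro h
        have hne : p ≠ q := fun he => hlt.1.1 p (he ▸ h)
        rcases hltB.1.2.2.1 p q hp hq hne with h' | h'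
        · exact h'
        · exfalso
          have : (p, q) ∈ R.discord J lt ltB := R.mem_discord.mpr ⟨hp, hq, hps, hqs, h, h'⟩
          rw [hd] at this
          exact absurd this (Finset.notMem_empty _)
      · intro h
        have hne : p ≠ q := fun he => hltB.1.1 p (he ▸ h)
        rcases hlt.1.2.2.1 p q hp hq hne with h' | h'
        · exact h'
        · exfalso
          have : (q, p) ∈ R.discord J lt ltB := R.mem_discord.mpr ⟨hq, hp, hqs, hps, h', h⟩
          rw [hd] at this
          exact absurd this (Finset.notMem_empty _)
    ext w
    constructor
    · rintro ⟨L, hout, hch, hpath⟩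
      refine ⟨L, hout, (chain'_congr L ?_).mp hch, hpath⟩
      intro p hp q hq
      exact hagree p q (hout p hp).1 (hout p hp).2 (hout q hq).1 (hout q hq).2
    · rintro ⟨L, hout, hch, hpath⟩
      refine ⟨L, hout, (chain'_congr L ?_).mpr hch, hpath⟩
      intro p hp q hq
      exact hagree p q (hout p hp).1 (hout p hp).2 (hout q hq).1 (hout q hq).2
  · have hne : (R.discord J lt ltB).Nonempty := Finset.card_pos.mp (by omega)
    obtain ⟨β, γ, hmemF, hadjout⟩ := R.exists_adj_discord hlt hltB hne
    have hmem := R.mem_discord.mp hmemF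
    obtain ⟨hβp, hγp, hβs, hγs, h12, h21⟩ := hmem
    have hadj : ∀ ρ, R.IsPos ρ → lt β ρ → lt ρ γ → False := by
      intro ρ hρ hl1 hl2
      by_cases hs : ρ ∈ Submodule.span ℚ (R.α '' J)
      · exact R.adm_asym hlt hl1 (hlt.2.1 ρ β hρ hs hβp hβs)
      · exact hadjout ρ hρ hs hl1 hl2
    obtain ⟨ho, hsum, hdm1, hdm2⟩ :=
      R.pair_exclusion k ϖ J hfund hmin hJ hlt hltB hβp hβs hγp hγs h12 h21 hadj
    have hlt' := R.swapOrd_adm hlt hβp hβs hγp hγs h12 hadj hsum hdm1 hdm2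
    classical
    have hcard' : (R.discord J (R.swapOrd lt β γ) ltB).card = n - 1 := by
      rw [R.discord_swap hltB hmemF, Finset.card_erase_of_mem hmemF, hcard]
    have heq := R.eds_swapOrd y hlt hlt' h12 ho
    rw [heq]
    exact ihn (n - 1) (by omega) _ hlt' hcard'

theorem stmt19_aux (k : I) (ϖ : R.V) (hfund : R.IsFundamental k ϖ)
    (hmin : R.IsMinuscule ϖ) (J : Set I) (hJ : J = {i | i ≠ k})
    (lt1 lt2 : R.V → R.V → Prop)
    (h1 : R.IsReflectionOrder lt1) (h2 : R.IsReflectionOrder lt2)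
    (hc1 : ∀ β γ, R.posJ J β → R.IsPos γ → γ ∉ Submodule.span ℚ (R.α '' J) → lt1 β γ)
    (hc2 : ∀ β γ, R.posJ J β → R.IsPos γ → γ ∉ Submodule.span ℚ (R.α '' J) → lt2 β γ)
    (y : R.W) :
    R.eds J y lt1 = R.eds J y lt2 := by
  classical
  set lt1s : R.V → R.V → Prop := fun p q => R.IsPos p ∧ R.IsPos q ∧ lt1 p q with hdef1
  set lt2s : R.V → R.V → Prop := fun p q => R.IsPos p ∧ R.IsPos q ∧ lt2 p q with hdef2
  have mkAdm : ∀ (lt : R.V → R.V → Prop), R.IsReflectionOrder lt →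
      (∀ β γ, R.posJ J β → R.IsPos γ → γ ∉ Submodule.span ℚ (R.α '' J) → lt β γ) →
      R.Adm J (fun p q => R.IsPos p ∧ R.IsPos q ∧ lt p q) := by
    intro lt hro hcc
    obtain ⟨hir, htr, hto, hcv⟩ := hro
    refine ⟨⟨?_, ?_, ?_, ?_⟩, ?_, ?_⟩
    · intro a h; exact hir a h.2.2
    · intro a b c h h'; exact ⟨h.1, h'.2.1, htr _ _ _ h.2.2 h'.2.2⟩
    · intro p q hp hq hne
      rcases hto p q hp hq hne with h | h
      · exact Or.inl ⟨hp, hq, h⟩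
      · exact Or.inr ⟨hq, hp, h⟩
    · intro p q hp hq hs
      rcases hcv p q hp hq hs with ⟨u1, u2⟩ | ⟨u1, u2⟩
      · exact Or.inl ⟨⟨hp, hs, u1⟩, ⟨hs, hq, u2⟩⟩
      · exact Or.inr ⟨⟨hq, hs, u1⟩, ⟨hs, hp, u2⟩⟩
    · intro p q hp hps hq hqs
      exact ⟨hp, hq, hcc p q ⟨hp, hps⟩ hq hqs⟩
    · intro p q h
      exact ⟨h.1, h.2.1⟩
  have hadm1 : R.Adm J lt1s := mkAdm lt1 h1 hc1
  have hadm2 : R.Adm J lt2s := mkAdm lt2 h2 hc2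
  have restr : ∀ (lt : R.V → R.V → Prop),
      R.eds J y lt = R.eds J y (fun p q => R.IsPos p ∧ R.IsPos q ∧ lt p q) := by
    intro lt
    ext w
    constructor
    · rintro ⟨L, hout, hch, hpath⟩
      refine ⟨L, hout, (chain'_congr L ?_).mp hch, hpath⟩
      intro p hp q hq
      exact ⟨fun h => ⟨(hout p hp).1, (hout q hq).1, h⟩, fun h => h.2.2⟩
    · rintro ⟨L, hout, hch, hpath⟩
      refine ⟨L, hout, (chain'_congr L ?_).mp hch, hpath⟩
      intro p hp q hq
      exact ⟨fun h => h.2.2, fun h => ⟨(hout p hp).1, (hout q hq).1, h⟩⟩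
  calc R.eds J y lt1 = R.eds J y lt1s := restr lt1
    _ = R.eds J y lt2s :=
        R.eds_eq_of_card k ϖ J hfund hmin hJ y hadm2 _ lt1s hadm1 rfl
    _ = R.eds J y lt2 := (restr lt2).symm

end RootSystemData
/-- The set of endpoints of label-increasing Bruhat-graph paths from `y ∈ W^J`
with all labels in `Δ⁺ \ Δ⁺_J` does not depend on the choice of a reflection
order satisfying `β ⊲ γ` for `β ∈ Δ⁺_J`, `γ ∈ Δ⁺ \ Δ⁺_J`. -/
theorem stmt19 {I : Type} [Fintype I] [DecidableEq I] (R : RootSystemData I)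
    (k : I) (ϖ : R.V) (hfund : R.IsFundamental k ϖ) (hmin : R.IsMinuscule ϖ)
    (J : Set I) (hJ : J = {i | i ≠ k})
    (lt1 lt2 : R.V → R.V → Prop)
    (h1 : R.IsReflectionOrder lt1) (h2 : R.IsReflectionOrder lt2)
    (hc1 : ∀ β γ, R.posJ J β → R.IsPos γ → γ ∉ Submodule.span ℚ (R.α '' J) →
      lt1 β γ)
    (hc2 : ∀ β γ, R.posJ J β → R.IsPos γ → γ ∉ Submodule.span ℚ (R.α '' J) →
      lt2 β γ)
    (y : R.W) (hy : R.IsMinRep J y) :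
    {w : R.W | ∃ labels : List R.V,
        (∀ β ∈ labels, R.IsPos β ∧ β ∉ Submodule.span ℚ (R.α '' J)) ∧
        labels.Chain' lt1 ∧ BGPath R y labels w} =
    {w : R.W | ∃ labels : List R.V,
        (∀ β ∈ labels, R.IsPos β ∧ β ∉ Submodule.span ℚ (R.α '' J)) ∧
        labels.Chain' lt2 ∧ BGPath R y labels w} := by
  exact R.stmt19_aux k ϖ hfund hmin J hJ lt1 lt2 h1 h2 hc1 hc2 y
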